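/- Let u ∈ L¹_loc(ℝⁿ) be nonnegative, let Q₀ be a cube, and define U₁(x) = sup { (1/|Q|)∫_Q u : Q a cube containing x with ℓ(Q) ≤ ℓ(Q₀) }. Then for every x ∈ Q₀, U₁(x) − u_{3Q₀} ≤ M[1_{3Q₀}(u − u_{3Q₀})](x), where M is the non-centred Hardy–Littlewood maximal function over axis-parallel cubes and u_{3Q₀} denotes the average of u over 3Q₀. -/

import Mathlib

open MeasureTheory Metric ENNReal

/-- The non-centred Hardy–Littlewood maximal function over axis-parallel cubes
(= sup-metric balls in `Fin n → ℝ`). -/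
noncomputable def maximalFn {n : ℕ} (f : (Fin n → ℝ) → ℝ) (x : Fin n → ℝ) : ℝ≥0∞ :=
  ⨆ (c : Fin n → ℝ) (r : ℝ) (_ : 0 < r) (_ : x ∈ ball c r),
    ENNReal.ofReal (⨍ y in ball c r, |f y|)

/-- For `x ∈ Q₀` and any cube `Q ∋ x` with side `≤` side of `Q₀`,
`u_Q − u_{3Q₀} ≤ M[1_{3Q₀}(u − u_{3Q₀})](x)`; taking the sup over such `Q` this is
`U₁(x) − u_{3Q₀} ≤ M[1_{3Q₀}(u − u_{3Q₀})](x)`. -/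
theorem stmt2 (n : ℕ) (u : (Fin n → ℝ) → ℝ) (hu : LocallyIntegrable u volume)
    (hu0 : ∀ x, 0 ≤ u x) (c₀ : Fin n → ℝ) (r₀ : ℝ) (hr₀ : 0 < r₀)
    (x : Fin n → ℝ) (hx : x ∈ ball c₀ r₀)
    (c : Fin n → ℝ) (r : ℝ) (hr : 0 < r) (hrle : r ≤ r₀) (hxc : x ∈ ball c r) :
    ENNReal.ofReal ((⨍ y in ball c r, u y) - ⨍ y in ball c₀ (3 * r₀), u y) ≤
      maximalFn (Set.indicator (ball c₀ (3 * r₀))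
        (fun z => u z - ⨍ w in ball c₀ (3 * r₀), u w)) x := by
  set a : ℝ := ⨍ w in ball c₀ (3 * r₀), u w with ha
  set f : (Fin n → ℝ) → ℝ :=
    Set.indicator (ball c₀ (3 * r₀)) (fun z => u z - a) with hf
  have hsub : ball c r ⊆ ball c₀ (3 * r₀) := by
    intro y hy
    have h1 : dist y c < r := mem_ball.1 hy
    have h2 : dist c x < r := by rw [dist_comm]; exact mem_ball.1 hxc
    have h3 : dist x c₀ < r₀ := mem_ball.1 hx
    have := dist_triangle4 y c x c₀
    rw [mem_ball]
    linarith
  have hvol : volume (ball c r) ≠ 0 := (measure_ball_pos volume c hr).ne'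
  have hvolt : volume (ball c r) ≠ ⊤ := measure_ball_lt_top.ne
  have hInt : IntegrableOn u (ball c r) volume := by
    have := hu.integrableOn_isCompact (isCompact_closedBall c r)
    exact this.mono_set ball_subset_closedBall
  -- f = u - a on ball c r
  have hfeq : ∀ y ∈ ball c r, f y = u y - a := fun y hy =>
    Set.indicator_of_mem (hsub hy) _
  have hsubInt : IntegrableOn (fun y => u y - a) (ball c r) volume :=
    hInt.sub (integrableOn_const measure_ball_lt_top.ne)
  have hIntf : IntegrableOn f (ball c r) volume :=
    hsubInt.congr_fun (fun y hy => (hfeq y hy).symm) measurableSet_ball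
  have hV : (0:ℝ) < (volume (ball c r)).toReal := ENNReal.toReal_pos hvol hvolt
  have h2 : ⨍ y in ball c r, f y = (⨍ y in ball c r, u y) - a := by
    rw [setAverage_congr_fun measurableSet_ball (Filter.Eventually.of_forall hfeq)]
    rw [setAverage_eq, setAverage_eq,
      integral_sub hInt (integrableOn_const measure_ball_lt_top.ne),
      setIntegral_const]
    simp only [smul_eq_mul, mul_sub]
    rw [inv_mul_cancel_left₀ (show volume.real (ball c r) ≠ 0 from hV.ne')]
  have key : (⨍ y in ball c r, u y) - a ≤ ⨍ y in ball c r, |f y| := by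
    rw [← h2, setAverage_eq, setAverage_eq, smul_eq_mul, smul_eq_mul]
    exact mul_le_mul_of_nonneg_left
      (setIntegral_mono_on hIntf hIntf.abs measurableSet_ball fun y _ => le_abs_self _)
      (inv_nonneg.2 hV.le)
  calc ENNReal.ofReal ((⨍ y in ball c r, u y) - a)
      ≤ ENNReal.ofReal (⨍ y in ball c r, |f y|) := ENNReal.ofReal_le_ofReal key
    _ ≤ _ := by
        apply le_iSup_of_le c
        apply le_iSup_of_le r
        apply le_iSup_of_le hr
        exact le_iSup_of_le hxc le_rfl
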